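/- Let n ≥ 3, s ∈ (0,2), k^{2-s} = (n-2)(n-s)K(n,s) with K(n,s) > 0, and a > 0, X₀ ∈ ℝⁿ. Then the function û(X) = (a^{(2-s)/2} k^{(2-s)/2} / (a^{2-s} + |X - X₀|^{2-s}))^{(n-2)/(2-s)} is a classical solution on ℝⁿ \ {X₀} of Δû = K(n,s)^{-1} û^{2*(s)-1} / |X - X₀|^s, where 2*(s) = 2(n-s)/(n-2) and Δ = -div(∇) is the (geometer's) Laplacian. -/

import Mathlib

open Real

noncomputable def gB (s a C β : ℝ) : ℝ → ℝ := fun t =>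
  C ^ β * (a ^ (2 - s) + t ^ ((2 - s) / 2)) ^ (-β)

noncomputable def gB1 (s a C β : ℝ) : ℝ → ℝ := fun t =>
  C ^ β * (-β * (a ^ (2 - s) + t ^ ((2 - s) / 2)) ^ (-β - 1) *
    ((2 - s) / 2 * t ^ ((2 - s) / 2 - 1)))

noncomputable def gB2 (s a C β : ℝ) : ℝ → ℝ := fun t =>
  C ^ β * -β *
    ((-β - 1) * (a ^ (2 - s) + t ^ ((2 - s) / 2)) ^ (-β - 2) *
        ((2 - s) / 2 * t ^ ((2 - s) / 2 - 1)) * ((2 - s) / 2 * t ^ ((2 - s) / 2 - 1)) +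
      (a ^ (2 - s) + t ^ ((2 - s) / 2)) ^ (-β - 1) *
        ((2 - s) / 2 * (((2 - s) / 2 - 1) * t ^ ((2 - s) / 2 - 2))))

lemma hH_pos {s a t : ℝ} (ha : 0 < a) (ht : 0 ≤ t) :
    0 < a ^ (2 - s) + t ^ ((2 - s) / 2) :=
  add_pos_of_pos_of_nonneg (rpow_pos_of_pos ha _) (rpow_nonneg ht _)

lemma hh_deriv {s a t : ℝ} (ht : 0 < t) :
    HasDerivAt (fun t : ℝ => a ^ (2 - s) + t ^ ((2 - s) / 2))
      ((2 - s) / 2 * t ^ ((2 - s) / 2 - 1)) t :=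
  (Real.hasDerivAt_rpow_const (Or.inl ht.ne')).const_add _

lemma gB_deriv {s a C β : ℝ} (ha : 0 < a) {t : ℝ} (ht : 0 < t) :
    HasDerivAt (gB s a C β) (gB1 s a C β t) t := by
  have h1 := (hh_deriv (a := a) (s := s) ht).rpow_const
    (p := -β) (Or.inl (hH_pos ha ht.le).ne')
  have h2 := h1.const_mul (C ^ β)
  rw [gB1]
  refine h2.congr_deriv ?_
  ring

lemma gB1_deriv {s a C β : ℝ} (ha : 0 < a) {t : ℝ} (ht : 0 < t) :
    HasDerivAt (gB1 s a C β) (gB2 s a C β t) t := by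
  have hfun : gB1 s a C β = fun t : ℝ => (C ^ β * -β) *
      ((a ^ (2 - s) + t ^ ((2 - s) / 2)) ^ (-β - 1) *
        ((2 - s) / 2 * t ^ ((2 - s) / 2 - 1))) := by
    funext t; simp [gB1]; ring
  have h1 := (hh_deriv (a := a) (s := s) ht).rpow_const
    (p := -β - 1) (Or.inl (hH_pos ha ht.le).ne')
  have h2 : HasDerivAt (fun t : ℝ => (2 - s) / 2 * t ^ ((2 - s) / 2 - 1))
      ((2 - s) / 2 * (((2 - s) / 2 - 1) * t ^ ((2 - s) / 2 - 2))) t := by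
    have := (Real.hasDerivAt_rpow_const (x := t) (p := (2 - s) / 2 - 1)
      (Or.inl ht.ne')).const_mul ((2 - s) / 2)
    refine this.congr_deriv ?_
    ring_nf
  have he : -β - 1 - 1 = -β - 2 := by ring
  rw [he] at h1
  have h3 := (h1.mul h2).const_mul (C ^ β * -β)
  rw [hfun]
  refine h3.congr_deriv ?_
  rw [gB2]
  ring

lemma gB_contDiffAt {s a C β : ℝ} (ha : 0 < a) {t : ℝ} (ht : 0 < t) :
    ContDiffAt ℝ 2 (gB s a C β) t := by
  have h1 : ContDiffAt ℝ 2 (fun t : ℝ => a ^ (2 - s) + t ^ ((2 - s) / 2)) t :=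
    contDiffAt_const.add (Real.contDiffAt_rpow_const_of_ne ht.ne')
  exact contDiffAt_const.mul (h1.rpow_const_of_ne (hH_pos ha ht.le).ne')

lemma gB_alg (n : ℕ) (hn : 3 ≤ n) (s K a k β C t : ℝ)
    (hs0 : 0 < s) (hs2 : s < 2) (hK : 0 < K) (ha : 0 < a) (hk : 0 < k)
    (hkdef : k ^ (2 - s) = ((n : ℝ) - 2) * ((n : ℝ) - s) * K)
    (hβ : β = ((n : ℝ) - 2) / (2 - s)) (hC : C = a ^ ((2 - s) / 2) * k ^ ((2 - s) / 2))
    (ht : 0 < t) :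
    -(2 * (n : ℝ) * gB1 s a C β t + 4 * t * gB2 s a C β t) =
      K⁻¹ * gB s a C β t ^ (2 * ((n : ℝ) - s) / ((n : ℝ) - 2) - 1) / t ^ (s / 2) := by
  have hn3 : (3 : ℝ) ≤ (n : ℝ) := by exact_mod_cast hn
  have hα : (0 : ℝ) < 2 - s := by linarith
  have hn2 : (0 : ℝ) < (n : ℝ) - 2 := by linarith
  have hC0 : 0 < C := by
    rw [hC]; positivity
  set A := a ^ (2 - s) with hA
  set P := t ^ ((2 - s) / 2) with hP
  have hA0 : 0 < A := rpow_pos_of_pos ha _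
  have hP0 : 0 < P := rpow_pos_of_pos ht _
  have hH0 : 0 < A + P := by linarith
  -- exponent rewrites
  have e2 : (A + P) ^ (-β - 1) = (A + P) ^ (-β - 2) * (A + P) := by
    rw [show (-β - 1 : ℝ) = (-β - 2) + 1 by ring, Real.rpow_add hH0, Real.rpow_one]
  have e3 : t ^ ((2 - s) / 2 - 1) = P / t := by
    rw [Real.rpow_sub ht, Real.rpow_one]
  have e4 : t ^ ((2 - s) / 2 - 2) = P / (t * t) := by
    rw [show ((2 - s) / 2 - 2 : ℝ) = (2 - s) / 2 - 1 - 1 by ring, Real.rpow_sub ht,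
      Real.rpow_sub ht, Real.rpow_one, div_div]
  have e5 : t ^ (s / 2) = t / P := by
    rw [show (s / 2 : ℝ) = 1 - (2 - s) / 2 by ring, Real.rpow_sub ht, Real.rpow_one]
  have eC2 : C ^ (2 : ℝ) = A * (((n : ℝ) - 2) * ((n : ℝ) - s) * K) := by
    rw [hC, Real.mul_rpow (rpow_nonneg ha.le _) (rpow_nonneg hk.le _),
      ← Real.rpow_mul ha.le, ← Real.rpow_mul hk.le]
    rw [show ((2 - s) / 2 * 2 : ℝ) = 2 - s by ring, hkdef, hA]
  have eθ : β * (2 * ((n : ℝ) - s) / ((n : ℝ) - 2) - 1) = β + 2 := by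
    rw [hβ]; field_simp; ring
  have e6 : gB s a C β t ^ (2 * ((n : ℝ) - s) / ((n : ℝ) - 2) - 1) =
      C ^ β * (A * (((n : ℝ) - 2) * ((n : ℝ) - s) * K)) * (A + P) ^ (-β - 2) := by
    rw [show gB s a C β t = C ^ β * (A + P) ^ (-β) from rfl,
      Real.mul_rpow (rpow_nonneg hC0.le _) (rpow_nonneg hH0.le _),
      ← Real.rpow_mul hC0.le, ← Real.rpow_mul hH0.le, eθ,
      show (-β * (2 * ((n : ℝ) - s) / ((n : ℝ) - 2) - 1)) = -β - 2 by
        rw [neg_mul, eθ]; ring,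
      show (β + 2 : ℝ) = β + (2 : ℝ) from rfl, Real.rpow_add hC0, eC2]
  rw [show gB1 s a C β t = C ^ β * (-β * (A + P) ^ (-β - 1) *
        ((2 - s) / 2 * t ^ ((2 - s) / 2 - 1))) from rfl,
    show gB2 s a C β t = C ^ β * -β *
      ((-β - 1) * (A + P) ^ (-β - 2) * ((2 - s) / 2 * t ^ ((2 - s) / 2 - 1)) *
        ((2 - s) / 2 * t ^ ((2 - s) / 2 - 1)) +
      (A + P) ^ (-β - 1) * ((2 - s) / 2 * (((2 - s) / 2 - 1) * t ^ ((2 - s) / 2 - 2)))) from rfl,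
    e2, e3, e4, e5, e6]
  subst hβ
  have hB0 : (0 : ℝ) < (A + P) ^ (-(((n : ℝ) - 2) / (2 - s)) - 2) := rpow_pos_of_pos hH0 _
  field_simp
  ring

/-- the standard bubble
`uhat(X) = (a^{(2-s)/2} k^{(2-s)/2} / (a^{2-s} + |X-X₀|^{2-s}))^{(n-2)/(2-s)}`
(with `k^{2-s} = (n-2)(n-s)K(n,s)`) is a classical solution of
`Δuhat = K(n,s)^{-1} uhat^{2*(s)-1}/|X-X₀|^s` on `ℝⁿ \ {X₀}`, where `Δ = -∑ ∂²/∂xᵢ²`. -/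
theorem stmt_2 (n : ℕ) (hn : 3 ≤ n) (s K a k : ℝ) (hs0 : 0 < s) (hs2 : s < 2)
    (hK : 0 < K) (ha : 0 < a) (hk : 0 < k)
    (hkdef : k ^ (2 - s) = ((n : ℝ) - 2) * ((n : ℝ) - s) * K)
    (X₀ : EuclideanSpace ℝ (Fin n)) :
    let twoStar : ℝ := 2 * ((n : ℝ) - s) / ((n : ℝ) - 2)
    let uhat : EuclideanSpace ℝ (Fin n) → ℝ := fun X =>
      (a ^ ((2 - s) / 2) * k ^ ((2 - s) / 2) / (a ^ (2 - s) + ‖X - X₀‖ ^ (2 - s)))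
        ^ (((n : ℝ) - 2) / (2 - s))
    ∀ X, X ≠ X₀ →
      ContDiffAt ℝ 2 uhat X ∧
      -(∑ i : Fin n, fderiv ℝ (fun y => fderiv ℝ uhat y (EuclideanSpace.single i 1)) X
          (EuclideanSpace.single i 1)) =
        K⁻¹ * uhat X ^ (twoStar - 1) / ‖X - X₀‖ ^ s := by
  intro twoStar uhat X hX
  obtain ⟨β, hβ⟩ : ∃ β : ℝ, β = ((n : ℝ) - 2) / (2 - s) := ⟨_, rfl⟩
  obtain ⟨C, hC⟩ : ∃ C : ℝ, C = a ^ ((2 - s) / 2) * k ^ ((2 - s) / 2) := ⟨_, rfl⟩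
  have hn3 : (3 : ℝ) ≤ (n : ℝ) := by exact_mod_cast hn
  have hα : (0 : ℝ) < 2 - s := by linarith
  have hC0 : 0 < C := by rw [hC]; positivity
  set q : EuclideanSpace ℝ (Fin n) → ℝ := fun y => ‖y - X₀‖ ^ 2 with hqdef
  have hq0 : ∀ y : EuclideanSpace ℝ (Fin n), 0 ≤ q y := fun y => by positivity
  have hnorm : ∀ (y : EuclideanSpace ℝ (Fin n)) (p : ℝ), q y ^ (p / 2) = ‖y - X₀‖ ^ p := by
    intro y p
    have hy : q y = ‖y - X₀‖ ^ 2 := rfl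
    rw [hy, ← Real.rpow_natCast ‖y - X₀‖ 2, ← Real.rpow_mul (norm_nonneg _)]
    norm_num
    rw [show (2 : ℝ) * (p / 2) = p by ring]
  have hqpos : ∀ y : EuclideanSpace ℝ (Fin n), y ≠ X₀ → 0 < q y := by
    intro y hy
    have h1 : y - X₀ ≠ 0 := sub_ne_zero.mpr hy
    have h2 : q y = ‖y - X₀‖ ^ 2 := rfl
    rw [h2]
    exact pow_pos (norm_pos_iff.mpr h1) 2
  have huq : ∀ y, uhat y = gB s a C β (q y) := by
    intro y
    unfold uhat
    rw [← hC, ← hβ]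
    show (C / (a ^ (2 - s) + ‖y - X₀‖ ^ (2 - s))) ^ β = gB s a C β (q y)
    rw [gB, ← hnorm y (2 - s),
      Real.div_rpow hC0.le (hH_pos ha (hq0 y)).le,
      Real.rpow_neg (hH_pos ha (hq0 y)).le, div_eq_mul_inv]
  have hufun : uhat = gB s a C β ∘ q := funext huq
  -- derivative of q
  have hq_deriv : ∀ y : EuclideanSpace ℝ (Fin n), HasFDerivAt q ((2 : ℕ) • innerSL ℝ (y - X₀)) y := by
    intro y
    have h1 : HasFDerivAt (fun y : EuclideanSpace ℝ (Fin n) => y - X₀)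
        (ContinuousLinearMap.id ℝ _) y := (hasFDerivAt_id y).sub_const X₀
    have h2 := h1.norm_sq
    simpa using h2
  constructor
  · rw [hufun]
    exact (gB_contDiffAt ha (hqpos X hX)).comp X
      (((contDiff_norm_sq ℝ).comp (contDiff_id.sub contDiff_const)).contDiffAt)
  · have ht := hqpos X hX
    have hD : ∀ y : EuclideanSpace ℝ (Fin n), y ≠ X₀ → HasFDerivAt uhat
        (gB1 s a C β (q y) • ((2 : ℕ) • innerSL ℝ (y - X₀))) y := by
      intro y hy
      rw [hufun]
      exact (gB_deriv ha (hqpos y hy)).comp_hasFDerivAt y (hq_deriv y)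
    have hval : ∀ i : Fin n,
        fderiv ℝ (fun y => fderiv ℝ uhat y (EuclideanSpace.single i 1)) X
          (EuclideanSpace.single i 1) =
        gB1 s a C β (q X) * 2 +
          (2 * (X - X₀) i) * (gB2 s a C β (q X) * (2 * (X - X₀) i)) := by
      intro i
      have hEv : (fun y => fderiv ℝ uhat y (EuclideanSpace.single i 1)) =ᶠ[nhds X]
          (fun y => gB1 s a C β (q y) * (2 * (y - X₀) i)) := by
        filter_upwards [isOpen_compl_singleton.mem_nhds hX] with y hy
        rw [(hD y hy).fderiv]
        simp [EuclideanSpace.inner_single_right]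
      have hg1q : HasFDerivAt (fun y => gB1 s a C β (q y))
          (gB2 s a C β (q X) • ((2 : ℕ) • innerSL ℝ (X - X₀))) X :=
        (gB1_deriv ha ht).comp_hasFDerivAt X (hq_deriv X)
      have hlin : HasFDerivAt (fun y : EuclideanSpace ℝ (Fin n) => 2 * (y - X₀) i)
          ((2 : ℝ) • (EuclideanSpace.proj i : EuclideanSpace ℝ (Fin n) →L[ℝ] ℝ)) X := by
        have h1 : HasFDerivAt (fun y : EuclideanSpace ℝ (Fin n) => (y - X₀) i)
            (EuclideanSpace.proj (𝕜 := ℝ) i) X :=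
          ((EuclideanSpace.proj (𝕜 := ℝ) i).hasFDerivAt (x := X)).sub_const (X₀ i)
        exact h1.const_mul 2
      have hprod := hg1q.fun_mul hlin
      rw [hEv.fderiv_eq, hprod.fderiv]
      simp [EuclideanSpace.inner_single_right, EuclideanSpace.single_apply]
    rw [Finset.sum_congr rfl fun i _ => hval i]
    have hsum : ∑ i : Fin n, ((X - X₀) i) ^ 2 = q X := by
      have h2 : q X = ‖X - X₀‖ ^ 2 := rfl
      rw [h2, EuclideanSpace.norm_eq, Real.sq_sqrt (by positivity)]
      exact Finset.sum_congr rfl fun i _ => by rw [Real.norm_eq_abs, sq_abs]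
    have hsum2 : ∑ i : Fin n, (2 * (X - X₀) i) * (gB2 s a C β (q X) * (2 * (X - X₀) i)) =
        4 * gB2 s a C β (q X) * q X := by
      rw [show ∀ f : Fin n → ℝ, (∑ i, f i) = ∑ i, f i from fun _ => rfl]
      calc ∑ i : Fin n, (2 * (X - X₀) i) * (gB2 s a C β (q X) * (2 * (X - X₀) i))
          = ∑ i : Fin n, (4 * gB2 s a C β (q X)) * ((X - X₀) i) ^ 2 :=
            Finset.sum_congr rfl fun i _ => by ring
        _ = 4 * gB2 s a C β (q X) * q X := by rw [← Finset.mul_sum, hsum]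
    rw [Finset.sum_add_distrib, hsum2, Finset.sum_const, Finset.card_univ, Fintype.card_fin,
      nsmul_eq_mul]
    rw [huq X, ← hnorm X s]
    unfold twoStar
    have halg := gB_alg n hn s K a k β C (q X) hs0 hs2 hK ha hk hkdef hβ hC ht
    linear_combination halg
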